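/- Fix thresholds τ₁ > τ₂ > 0, let z = Σ_i x_i·q > 0 (sum of all n inner products, all nonnegative), and suppose S ≥ 3 z ln(n) / (√τ₁ − √τ₂)². Draw S i.i.d. samples where index i is chosen with probability (x_i·q)/z, and let counter[i] be the number of times i is drawn. Then with probability at least 1 − 1/n, for every pair of indices i₁, i₂ with x_{i₁}·q ≥ τ₁ and x_{i₂}·q ≤ τ₂, one has counter[i₁] > counter[i₂]. -/

import Mathlib

open Real MeasureTheory ENNReal Finset

private lemma aux_pow_le {p₁ p₂ : ℝ} (h2 : 0 ≤ p₂) (hle : p₂ ≤ p₁) {c₁ c₂ : ℕ} (hc : c₁ ≤ c₂) :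
    p₁ ^ c₁ * p₂ ^ c₂ ≤ Real.sqrt (p₁ * p₂) ^ (c₁ + c₂) := by
  have h1 : 0 ≤ p₁ := le_trans h2 hle
  obtain ⟨k, rfl⟩ := Nat.exists_eq_add_of_le hc
  have hs : p₂ ≤ Real.sqrt (p₁ * p₂) := by
    nlinarith [Real.sq_sqrt (show (0:ℝ) ≤ p₁ * p₂ by nlinarith), Real.sqrt_nonneg (p₁ * p₂),
      sq_nonneg (Real.sqrt (p₁ * p₂) - p₂)]
  have hsq : Real.sqrt (p₁ * p₂) ^ 2 = p₁ * p₂ := Real.sq_sqrt (by positivity)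
  calc p₁ ^ c₁ * p₂ ^ (c₁ + k) = (p₁ * p₂) ^ c₁ * p₂ ^ k := by
        rw [pow_add, mul_pow]; ring
    _ ≤ (p₁ * p₂) ^ c₁ * Real.sqrt (p₁ * p₂) ^ k := by
        have := pow_le_pow_left₀ h2 hs k
        have hnn : (0:ℝ) ≤ (p₁ * p₂) ^ c₁ := by positivity
        exact mul_le_mul_of_nonneg_left this hnn
    _ = Real.sqrt (p₁ * p₂) ^ (c₁ + (c₁ + k)) := by
        rw [show c₁ + (c₁ + k) = 2 * c₁ + k by ring, pow_add, pow_mul, hsq]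

private lemma measure_finset_eq {n S : ℕ} (μ : PMF (Fin n)) (s : Finset (Fin S → Fin n)) :
    (Measure.pi fun _ : Fin S => μ.toMeasure) ↑s = ∑ ω ∈ s, ∏ l, μ (ω l) := by
  have hsingle : ∀ ω : Fin S → Fin n,
      (Measure.pi fun _ : Fin S => μ.toMeasure) {ω} = ∏ l, μ (ω l) := by
    intro ω
    rw [← Set.univ_pi_singleton, Measure.pi_pi]
    exact Finset.prod_congr rfl fun l _ =>
      PMF.toMeasure_apply_singleton _ _ (measurableSet_singleton _)
  rw [show (↑s : Set (Fin S → Fin n)) = ⋃ ω ∈ s, {ω} by ext ω; simp]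
  rw [measure_biUnion_finset ?_ fun ω _ => measurableSet_singleton ω]
  · exact Finset.sum_congr rfl fun ω _ => hsingle ω
  · intro a _ b _ hab
    simp [Function.onFun, Set.disjoint_singleton, hab]

private lemma prod_split {n S : ℕ} (f : Fin n → ℝ≥0∞) (ω : Fin S → Fin n) (i₁ i₂ : Fin n)
    (hne : i₁ ≠ i₂) :
    ∏ l, f (ω l) =
      (f i₁ ^ (Finset.univ.filter fun l => ω l = i₁).card *
       f i₂ ^ (Finset.univ.filter fun l => ω l = i₂).card) *
      ∏ l ∈ Finset.univ.filter (fun l => ω l ≠ i₁ ∧ ω l ≠ i₂), f (ω l) := by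
  classical
  rw [← Finset.prod_filter_mul_prod_filter_not Finset.univ (fun l => ω l = i₁) (fun l => f (ω l)),
      ← Finset.prod_filter_mul_prod_filter_not
        (Finset.univ.filter fun l => ¬ ω l = i₁) (fun l => ω l = i₂) (fun l => f (ω l)),
      Finset.filter_filter, Finset.filter_filter]
  have h1 : ∏ l ∈ Finset.univ.filter (fun l => ω l = i₁), f (ω l)
      = f i₁ ^ (Finset.univ.filter fun l => ω l = i₁).card := by
    rw [← Finset.prod_const]
    exact Finset.prod_congr rfl fun l hl => by rw [(Finset.mem_filter.mp hl).2]
  have h2 : (Finset.univ.filter fun l => ¬ ω l = i₁ ∧ ω l = i₂)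
      = Finset.univ.filter fun l => ω l = i₂ := by
    ext l
    simp only [Finset.mem_filter, Finset.mem_univ, true_and, and_iff_right_iff_imp]
    intro h hh
    exact hne (by rw [← hh, ← h])
  have h3 : ∏ l ∈ Finset.univ.filter (fun l => ω l = i₂), f (ω l)
      = f i₂ ^ (Finset.univ.filter fun l => ω l = i₂).card := by
    rw [← Finset.prod_const]
    exact Finset.prod_congr rfl fun l hl => by rw [(Finset.mem_filter.mp hl).2]
  have h4 : (Finset.univ.filter fun l => ¬ ω l = i₁ ∧ ¬ ω l = i₂)
      = Finset.univ.filter fun l => ω l ≠ i₁ ∧ ω l ≠ i₂ := rfl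
  rw [h1, h2, h3, h4, mul_assoc]

set_option maxHeartbeats 1600000 in
private lemma pairBound {n S : ℕ} (μ : PMF (Fin n)) (p : Fin n → ℝ)
    (hp : ∀ i, 0 ≤ p i) (hμ : ∀ i, μ i = ENNReal.ofReal (p i))
    (hsum : ∑ i, p i = 1) (i₁ i₂ : Fin n) (hne : i₁ ≠ i₂) (hle : p i₂ ≤ p i₁) :
    (Measure.pi fun _ : Fin S => μ.toMeasure)
      {ω | (Finset.univ.filter fun l => ω l = i₁).card ≤
           (Finset.univ.filter fun l => ω l = i₂).card}
      ≤ ENNReal.ofReal (Real.exp (-((S:ℝ) * (Real.sqrt (p i₁) - Real.sqrt (p i₂)) ^ 2))) := by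
  classical
  set δ : ℝ := (Real.sqrt (p i₁) - Real.sqrt (p i₂)) ^ 2 with hδ_def
  set h : Fin n → ℝ := fun i => if i = i₁ ∨ i = i₂ then Real.sqrt (p i₁ * p i₂) else p i with hh
  have hhnn : ∀ i, 0 ≤ h i := by
    intro i
    by_cases hc : i = i₁ ∨ i = i₂ <;> simp [hh, hc, hp i, Real.sqrt_nonneg]
  set F : Finset (Fin S → Fin n) := Finset.univ.filter (fun ω =>
    (Finset.univ.filter fun l => ω l = i₁).card ≤
    (Finset.univ.filter fun l => ω l = i₂).card) with hF
  have hset : {ω : Fin S → Fin n | (Finset.univ.filter fun l => ω l = i₁).card ≤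
      (Finset.univ.filter fun l => ω l = i₂).card} = ↑F := by
    ext ω; simp [hF]
  -- sum of h
  have hsum_h : ∑ i, h i = 1 - δ := by
    have hz : ∀ i ∈ Finset.univ, i ∉ ({i₁, i₂} : Finset (Fin n)) → h i - p i = 0 := by
      intro i _ hi
      simp only [Finset.mem_insert, Finset.mem_singleton] at hi
      push_neg at hi
      simp [hh, hi.1, hi.2]
    have e1 : ∑ i, (h i - p i) = ∑ i ∈ ({i₁, i₂} : Finset (Fin n)), (h i - p i) :=
      (Finset.sum_subset (Finset.subset_univ _) hz).symm
    have e2 : ∑ i ∈ ({i₁, i₂} : Finset (Fin n)), (h i - p i)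
        = 2 * Real.sqrt (p i₁ * p i₂) - p i₁ - p i₂ := by
      rw [Finset.sum_pair hne]
      simp only [hh, if_pos (Or.inl rfl), if_pos (Or.inr rfl)]
      ring
    have e3 : Real.sqrt (p i₁) * Real.sqrt (p i₂) = Real.sqrt (p i₁ * p i₂) :=
      (Real.sqrt_mul (hp i₁) _).symm
    have e4 : Real.sqrt (p i₁) ^ 2 = p i₁ := Real.sq_sqrt (hp i₁)
    have e5 : Real.sqrt (p i₂) ^ 2 = p i₂ := Real.sq_sqrt (hp i₂)
    have e6 : ∑ i, (h i - p i) = ∑ i, h i - ∑ i, p i := Finset.sum_sub_distrib _ _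
    rw [hδ_def]
    nlinarith [e1, e2, e6, hsum]
  -- per-sample-point bound
  have hterm : ∀ ω ∈ F, ∏ l, μ (ω l) ≤ ∏ l, ENNReal.ofReal (h (ω l)) := by
    intro ω hω
    have hc : (Finset.univ.filter fun l => ω l = i₁).card ≤
        (Finset.univ.filter fun l => ω l = i₂).card := (Finset.mem_filter.mp hω).2
    rw [prod_split (fun i => μ i) ω i₁ i₂ hne,
        prod_split (fun i => ENNReal.ofReal (h i)) ω i₁ i₂ hne]
    have hrest : ∏ l ∈ Finset.univ.filter (fun l => ω l ≠ i₁ ∧ ω l ≠ i₂), μ (ω l)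
        = ∏ l ∈ Finset.univ.filter (fun l => ω l ≠ i₁ ∧ ω l ≠ i₂), ENNReal.ofReal (h (ω l)) := by
      refine Finset.prod_congr rfl fun l hl => ?_
      obtain ⟨hl1, hl2⟩ := (Finset.mem_filter.mp hl).2
      rw [hμ (ω l)]
      simp [hh, hl1, hl2]
    set c₁ := (Finset.univ.filter fun l => ω l = i₁).card
    set c₂ := (Finset.univ.filter fun l => ω l = i₂).card
    have hhead : μ i₁ ^ c₁ * μ i₂ ^ c₂
        ≤ ENNReal.ofReal (h i₁) ^ c₁ * ENNReal.ofReal (h i₂) ^ c₂ := by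
      have hv1 : h i₁ = Real.sqrt (p i₁ * p i₂) := by simp [hh]
      have hv2 : h i₂ = Real.sqrt (p i₁ * p i₂) := by simp [hh]
      rw [hμ i₁, hμ i₂, hv1, hv2,
          ← ENNReal.ofReal_pow (hp i₁), ← ENNReal.ofReal_pow (hp i₂),
          ← ENNReal.ofReal_pow (Real.sqrt_nonneg _), ← ENNReal.ofReal_pow (Real.sqrt_nonneg _),
          ← ENNReal.ofReal_mul (pow_nonneg (hp i₁) _),
          ← ENNReal.ofReal_mul (pow_nonneg (Real.sqrt_nonneg _) _)]
      refine ENNReal.ofReal_le_ofReal ?_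
      rw [← pow_add]
      exact aux_pow_le (hp i₂) hle hc
    exact mul_le_mul' hhead (le_of_eq hrest)
  -- put it together
  rw [hset, measure_finset_eq]
  calc ∑ ω ∈ F, ∏ l, μ (ω l)
      ≤ ∑ ω ∈ F, ∏ l, ENNReal.ofReal (h (ω l)) := Finset.sum_le_sum hterm
    _ ≤ ∑ ω : Fin S → Fin n, ∏ l, ENNReal.ofReal (h (ω l)) :=
        Finset.sum_le_sum_of_subset (Finset.subset_univ F)
    _ = (∑ i, ENNReal.ofReal (h i)) ^ S := (Fintype.sum_pow (fun i => ENNReal.ofReal (h i)) S).symm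
    _ = ENNReal.ofReal (1 - δ) ^ S := by
        rw [← ENNReal.ofReal_sum_of_nonneg (fun i _ => hhnn i), hsum_h]
    _ ≤ ENNReal.ofReal (Real.exp (-δ)) ^ S := by
        gcongr
        have := Real.add_one_le_exp (-δ)
        linarith
    _ = ENNReal.ofReal (Real.exp (-((S:ℝ) * δ))) := by
        rw [← ENNReal.ofReal_pow (Real.exp_nonneg _), ← Real.exp_nat_mul]
        ring_nf

set_option maxHeartbeats 1600000 in
/-- Theorem 1 (wedge sampling): with `S ≥ 3 z ln n / (√τ₁ - √τ₂)²` i.i.d. samples, where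
index `i` is drawn with probability `(x_i · q) / z`, with probability at least `1 - 1/n`
every index with inner product at least `τ₁` receives a strictly larger counter value than
every index with inner product at most `τ₂`. -/
theorem stmt_2 (n d S : ℕ) (x : Fin n → Fin d → ℝ) (q : Fin d → ℝ)
    (hx : ∀ i j, 0 ≤ x i j) (hq : ∀ j, 0 ≤ q j)
    (z : ℝ) (hz : z = ∑ i, ∑ j, x i j * q j) (hzpos : 0 < z)
    (τ₁ τ₂ : ℝ) (hτ : τ₁ > τ₂) (hτ₂ : τ₂ > 0)
    (hS : (S : ℝ) ≥ 3 * z * Real.log n / (Real.sqrt τ₁ - Real.sqrt τ₂) ^ 2)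
    (μ : PMF (Fin n)) (hμ : ∀ i, μ i = ENNReal.ofReal ((∑ j, x i j * q j) / z)) :
    (Measure.pi fun _ : Fin S => μ.toMeasure)
      {ω | ∀ i₁ i₂ : Fin n, (∑ j, x i₁ j * q j) ≥ τ₁ → (∑ j, x i₂ j * q j) ≤ τ₂ →
        (Finset.univ.filter fun l => ω l = i₂).card <
        (Finset.univ.filter fun l => ω l = i₁).card} ≥
    1 - (n : ℝ≥0∞)⁻¹ := by
  classical
  rcases Nat.eq_zero_or_pos n with hn | hn
  · subst hn
    simp
  have hnR : (0:ℝ) < n := by exact_mod_cast hn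
  set p : Fin n → ℝ := fun i => (∑ j, x i j * q j) / z with hp_def
  have hpnn : ∀ i, 0 ≤ p i := fun i =>
    div_nonneg (Finset.sum_nonneg fun j _ => mul_nonneg (hx i j) (hq j)) hzpos.le
  have hsum : ∑ i, p i = 1 := by
    rw [hp_def]
    rw [← Finset.sum_div, ← hz, div_self hzpos.ne']
  have hμ' : ∀ i, μ i = ENNReal.ofReal (p i) := hμ
  set G : Set (Fin S → Fin n) :=
    {ω | ∀ i₁ i₂ : Fin n, (∑ j, x i₁ j * q j) ≥ τ₁ → (∑ j, x i₂ j * q j) ≤ τ₂ →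
        (Finset.univ.filter fun l => ω l = i₂).card <
        (Finset.univ.filter fun l => ω l = i₁).card} with hG
  have hGm : MeasurableSet G := (Set.toFinite G).measurableSet
  have hD : (0:ℝ) < (Real.sqrt τ₁ - Real.sqrt τ₂) ^ 2 := by
    have : Real.sqrt τ₂ < Real.sqrt τ₁ := Real.sqrt_lt_sqrt hτ₂.le hτ
    exact pow_pos (sub_pos.mpr this) 2
  -- key per-pair bound
  have key : ∀ i₁ i₂ : Fin n, (∑ j, x i₁ j * q j) ≥ τ₁ → (∑ j, x i₂ j * q j) ≤ τ₂ →
      (Measure.pi fun _ : Fin S => μ.toMeasure)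
        {ω : Fin S → Fin n | (Finset.univ.filter fun l => ω l = i₁).card ≤
             (Finset.univ.filter fun l => ω l = i₂).card}
        ≤ ENNReal.ofReal (Real.exp (-(3 * Real.log n))) := by
    intro i₁ i₂ h1 h2
    have hne : i₁ ≠ i₂ := by
      rintro rfl
      linarith
    have hle : p i₂ ≤ p i₁ :=
      div_le_div_of_nonneg_right (by linarith) hzpos.le
    refine le_trans (pairBound μ p hpnn hμ' hsum i₁ i₂ hne hle) ?_
    refine ENNReal.ofReal_le_ofReal (Real.exp_le_exp.mpr (neg_le_neg ?_))
    -- 3 log n ≤ S * δ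
    have hs1 : Real.sqrt τ₁ ≤ Real.sqrt (∑ j, x i₁ j * q j) := Real.sqrt_le_sqrt h1
    have hs2 : Real.sqrt (∑ j, x i₂ j * q j) ≤ Real.sqrt τ₂ := Real.sqrt_le_sqrt h2
    have hsp1 : Real.sqrt (p i₁) = Real.sqrt (∑ j, x i₁ j * q j) / Real.sqrt z :=
      Real.sqrt_div (Finset.sum_nonneg fun j _ => mul_nonneg (hx i₁ j) (hq j)) z
    have hsp2 : Real.sqrt (p i₂) = Real.sqrt (∑ j, x i₂ j * q j) / Real.sqrt z :=
      Real.sqrt_div (Finset.sum_nonneg fun j _ => mul_nonneg (hx i₂ j) (hq j)) z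
    have hzs : (0:ℝ) < Real.sqrt z := Real.sqrt_pos.mpr hzpos
    have hdiff : (Real.sqrt τ₁ - Real.sqrt τ₂) / Real.sqrt z
        ≤ Real.sqrt (p i₁) - Real.sqrt (p i₂) := by
      rw [hsp1, hsp2, div_sub_div_same]
      exact div_le_div_of_nonneg_right (by linarith) hzs.le
    have hdnn : (0:ℝ) ≤ (Real.sqrt τ₁ - Real.sqrt τ₂) / Real.sqrt z := by
      have : Real.sqrt τ₂ ≤ Real.sqrt τ₁ := Real.sqrt_le_sqrt hτ.le
      exact div_nonneg (by linarith) (Real.sqrt_nonneg z)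
    have hδ : (Real.sqrt τ₁ - Real.sqrt τ₂) ^ 2 / z
        ≤ (Real.sqrt (p i₁) - Real.sqrt (p i₂)) ^ 2 := by
      have := pow_le_pow_left₀ hdnn hdiff 2
      rwa [div_pow, Real.sq_sqrt hzpos.le] at this
    have hSD : 3 * z * Real.log n ≤ (S:ℝ) * ((Real.sqrt τ₁ - Real.sqrt τ₂) ^ 2) :=
      (div_le_iff₀ hD).mp hS
    have hstep : 3 * Real.log n ≤ (S:ℝ) * ((Real.sqrt τ₁ - Real.sqrt τ₂) ^ 2 / z) := by
      rw [mul_div_assoc' , le_div_iff₀ hzpos]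
      linarith
    calc 3 * Real.log n ≤ (S:ℝ) * ((Real.sqrt τ₁ - Real.sqrt τ₂) ^ 2 / z) := hstep
      _ ≤ (S:ℝ) * (Real.sqrt (p i₁) - Real.sqrt (p i₂)) ^ 2 :=
          mul_le_mul_of_nonneg_left hδ (Nat.cast_nonneg S)
  -- union bound
  have hbad : (Measure.pi fun _ : Fin S => μ.toMeasure) Gᶜ ≤ (n : ℝ≥0∞)⁻¹ := by
    have hsub : Gᶜ ⊆ ⋃ pr : Fin n × Fin n,
        {ω : Fin S → Fin n | ((∑ j, x pr.1 j * q j) ≥ τ₁ ∧ (∑ j, x pr.2 j * q j) ≤ τ₂) ∧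
          (Finset.univ.filter fun l => ω l = pr.1).card ≤
          (Finset.univ.filter fun l => ω l = pr.2).card} := by
      intro ω hω
      simp only [hG, Set.mem_compl_iff, Set.mem_setOf_eq] at hω
      push_neg at hω
      obtain ⟨i₁, i₂, ha, hb, hcc⟩ := hω
      exact Set.mem_iUnion.mpr ⟨(i₁, i₂), ⟨⟨ha, hb⟩, hcc⟩⟩
    refine le_trans (measure_mono hsub) (le_trans (measure_iUnion_le _) ?_)
    rw [tsum_fintype]
    have hB : ∀ pr : Fin n × Fin n,
        (Measure.pi fun _ : Fin S => μ.toMeasure)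
          {ω : Fin S → Fin n | ((∑ j, x pr.1 j * q j) ≥ τ₁ ∧ (∑ j, x pr.2 j * q j) ≤ τ₂) ∧
            (Finset.univ.filter fun l => ω l = pr.1).card ≤
            (Finset.univ.filter fun l => ω l = pr.2).card}
          ≤ ENNReal.ofReal (Real.exp (-(3 * Real.log n))) := by
      intro pr
      by_cases hcond : (∑ j, x pr.1 j * q j) ≥ τ₁ ∧ (∑ j, x pr.2 j * q j) ≤ τ₂
      · refine le_trans (measure_mono ?_) (key pr.1 pr.2 hcond.1 hcond.2)
        intro ω hω
        exact hω.2
      · have : {ω : Fin S → Fin n | ((∑ j, x pr.1 j * q j) ≥ τ₁ ∧ (∑ j, x pr.2 j * q j) ≤ τ₂) ∧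
            (Finset.univ.filter fun l => ω l = pr.1).card ≤
            (Finset.univ.filter fun l => ω l = pr.2).card} = ∅ := by
          ext ω; simp only [Set.mem_setOf_eq, Set.mem_empty_iff_false, iff_false]
          exact fun hc => hcond hc.1
        rw [this]
        simp
    refine le_trans (Finset.sum_le_sum fun pr _ => hB pr) ?_
    rw [Finset.sum_const]
    have hexp : Real.exp (-(3 * Real.log n)) = (((n:ℝ)) ^ 3)⁻¹ := by
      rw [show (3:ℝ) * Real.log n = Real.log ((n:ℝ) ^ 3) by
            rw [Real.log_pow]; push_cast; ring,
          Real.exp_neg, Real.exp_log (by positivity)]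
    have hcard : (Finset.univ : Finset (Fin n × Fin n)).card = n * n := by simp
    rw [hcard, hexp, ENNReal.ofReal_inv_of_pos (by positivity),
        ENNReal.ofReal_pow hnR.le, ENNReal.ofReal_natCast]
    have hN0 : (n : ℝ≥0∞) ≠ 0 := Nat.cast_ne_zero.mpr hn.ne'
    have hNt : (n : ℝ≥0∞) ≠ ⊤ := ENNReal.natCast_ne_top n
    have hcancel : (n : ℝ≥0∞) * (n : ℝ≥0∞)⁻¹ = 1 := ENNReal.mul_inv_cancel hN0 hNt
    calc (n * n) • ((n : ℝ≥0∞) ^ 3)⁻¹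
        = ((n:ℝ≥0∞) * n) * ((n:ℝ≥0∞)⁻¹ * (n:ℝ≥0∞)⁻¹ * (n:ℝ≥0∞)⁻¹) := by
          rw [ENNReal.inv_pow, nsmul_eq_mul]
          push_cast
          ring
      _ = ((n:ℝ≥0∞) * (n:ℝ≥0∞)⁻¹) * (((n:ℝ≥0∞) * (n:ℝ≥0∞)⁻¹) * (n:ℝ≥0∞)⁻¹) := by ring
      _ = (n : ℝ≥0∞)⁻¹ := by rw [hcancel]; ring
      _ ≤ (n : ℝ≥0∞)⁻¹ := le_refl _
  -- conclude
  have hcompl := MeasureTheory.prob_compl_eq_one_sub (μ := Measure.pi fun _ : Fin S => μ.toMeasure)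
    hGm.compl
  rw [compl_compl] at hcompl
  rw [show (Measure.pi fun _ : Fin S => μ.toMeasure) G = 1 -
      (Measure.pi fun _ : Fin S => μ.toMeasure) Gᶜ from hcompl]
  exact tsub_le_tsub_left hbad 1
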